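/- arXiv:nlin/0004019 — 2 statements merged into one kernel-verified Lean document; each statement's English description precedes it below -/
import Mathlib

section
/- If φ₀ is nondegenerate, then there exist constants c, C > 0 and τ₀ ∈ (0,τ*) such that for all τ ∈ (τ₀,τ*): c·log(1/(τ*−τ)) ≤ F(τ) ≤ C·log(1/(τ*−τ)). -/
open MeasureTheory Real Set Filter

section AuxStmt13

lemma aux_antideriv (ε K : ℝ) (hε : 0 < ε) (hK : 0 < K) (x : ℝ) :
    HasDerivAt (fun t => K⁻¹ * Real.log (ε + K * t ^ 2)) (2 * x * (ε + K * x ^ 2)⁻¹) x := by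
  have hpos : 0 < ε + K * x ^ 2 := by positivity
  have h1 : HasDerivAt (fun t : ℝ => ε + K * t ^ 2) (K * (2 * x)) x := by
    simpa using ((hasDerivAt_pow 2 x).const_mul K).const_add ε
  have h2 := (h1.log hpos.ne').const_mul K⁻¹
  refine h2.congr_deriv ?_
  field_simp

lemma aux_1d (ε K : ℝ) (hε : 0 < ε) (hK : 0 < K) (r : ℝ) (hr : 0 ≤ r) :
    ∫ x in (0:ℝ)..r, 2 * x * (ε + K * x ^ 2)⁻¹ = K⁻¹ * Real.log ((ε + K * r ^ 2) / ε) := by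
  have hcont : Continuous fun x : ℝ => 2 * x * (ε + K * x ^ 2)⁻¹ := by
    apply Continuous.mul (by continuity)
    exact (continuous_const.add (continuous_const.mul (continuous_pow 2))).inv₀
      (fun x => by simp only [Pi.add_apply, Pi.mul_apply]; positivity)
  rw [intervalIntegral.integral_eq_sub_of_hasDerivAt
    (fun x _ => aux_antideriv ε K hε hK x) (hcont.intervalIntegrable 0 r)]
  norm_num
  rw [← mul_sub, ← Real.log_div (by positivity) hε.ne']

lemma aux_1d_abs (ε K : ℝ) (hε : 0 < ε) (hK : 0 < K) (r : ℝ) (hr : 0 ≤ r) :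
    ∫ x in Set.Icc (-r) r, 2 * |x| * (ε + K * x ^ 2)⁻¹ = 2 * K⁻¹ * Real.log ((ε + K * r ^ 2) / ε) := by
  rw [MeasureTheory.integral_Icc_eq_integral_Ioc,
    ← intervalIntegral.integral_of_le (by linarith : -r ≤ r)]
  rw [← intervalIntegral.integral_add_adjacent_intervals (b := (0:ℝ))
    (by apply Continuous.intervalIntegrable; apply Continuous.mul (by continuity);
        exact (continuous_const.add (continuous_const.mul (continuous_pow 2))).inv₀
          (fun x => by simp only [Pi.add_apply, Pi.mul_apply]; positivity))
    (by apply Continuous.intervalIntegrable; apply Continuous.mul (by continuity);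
        exact (continuous_const.add (continuous_const.mul (continuous_pow 2))).inv₀
          (fun x => by simp only [Pi.add_apply, Pi.mul_apply]; positivity))]
  have h1 : ∫ x in (-r)..(0:ℝ), 2 * |x| * (ε + K * x ^ 2)⁻¹
      = ∫ x in (-r)..(0:ℝ), 2 * (-x) * (ε + K * x ^ 2)⁻¹ := by
    apply intervalIntegral.integral_congr
    intro x hx
    rw [Set.uIcc_of_le (by linarith : -r ≤ (0:ℝ))] at hx
    simp only []
    rw [abs_of_nonpos hx.2]
  have h2 : ∫ x in (0:ℝ)..r, 2 * |x| * (ε + K * x ^ 2)⁻¹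
      = ∫ x in (0:ℝ)..r, 2 * x * (ε + K * x ^ 2)⁻¹ := by
    apply intervalIntegral.integral_congr
    intro x hx
    rw [Set.uIcc_of_le hr] at hx
    simp only []
    rw [abs_of_nonneg hx.1]
  have h3 : ∫ x in (-r)..(0:ℝ), 2 * (-x) * (ε + K * x ^ 2)⁻¹
      = ∫ x in (0:ℝ)..r, 2 * x * (ε + K * x ^ 2)⁻¹ := by
    have := intervalIntegral.integral_comp_neg (a := (0:ℝ)) (b := r)
      (f := fun x => 2 * (-x) * (ε + K * x ^ 2)⁻¹)
    simpa using this.symm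
  rw [h1, h2, h3, aux_1d ε K hε hK r hr]
  ring

lemma aux_meas_t1 (ε K : ℝ) :
    Measurable (fun p : ℝ × ℝ => if |p.2| ≤ |p.1| then (ε + K * p.1 ^ 2)⁻¹ else 0) := by
  apply Measurable.ite
  · exact measurableSet_le (measurable_snd.abs) (measurable_fst.abs)
  · exact ((measurable_const.add (measurable_const.mul (measurable_fst.pow_const 2))).inv)
  · exact measurable_const

lemma aux_intOn_t1 (ε K : ℝ) (hε : 0 < ε) (hK : 0 ≤ K) {s : Set (ℝ × ℝ)} (hs : volume s < ⊤) :
    IntegrableOn (fun p : ℝ × ℝ => if |p.2| ≤ |p.1| then (ε + K * p.1 ^ 2)⁻¹ else 0) s := by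
  apply Integrable.mono' (g := fun _ => ε⁻¹) (integrableOn_const hs.ne)
    ((aux_meas_t1 ε K).aestronglyMeasurable.restrict)
  filter_upwards with p
  by_cases h : |p.2| ≤ |p.1|
  · rw [if_pos h, Real.norm_eq_abs, abs_of_nonneg (by positivity : (0:ℝ) ≤ (ε + K * p.1 ^ 2)⁻¹)]
    apply inv_anti₀ hε
    nlinarith [sq_nonneg p.1]
  · rw [if_neg h]
    simp [inv_nonneg.2 hε.le]

lemma aux_J (ε K : ℝ) (hε : 0 < ε) (hK : 0 < K) (r : ℝ) (hr : 0 < r) :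
    ∫ p in (Set.Icc (-r) r ×ˢ Set.Icc (-r) r),
      (if |p.2| ≤ |p.1| then (ε + K * p.1 ^ 2)⁻¹ else 0)
      = 2 * K⁻¹ * Real.log ((ε + K * r ^ 2) / ε) := by
  have hfin : volume (Set.Icc (-r) r ×ˢ Set.Icc (-r) r) < ⊤ := by
    rw [Measure.volume_eq_prod, Measure.prod_prod]
    exact ENNReal.mul_lt_top (by simp) (by simp)
  rw [Measure.volume_eq_prod,
    MeasureTheory.setIntegral_prod _ (by rw [← Measure.volume_eq_prod]; exact aux_intOn_t1 ε K hε hK.le hfin)]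
  rw [show (∫ x in Set.Icc (-r) r, ∫ y in Set.Icc (-r) r,
      (if |y| ≤ |x| then (ε + K * x ^ 2)⁻¹ else 0))
      = ∫ x in Set.Icc (-r) r, 2 * |x| * (ε + K * x ^ 2)⁻¹ from ?_]
  · exact aux_1d_abs ε K hε hK r hr.le
  · apply MeasureTheory.setIntegral_congr_fun measurableSet_Icc
    intro x hx
    have hxr : |x| ≤ r := abs_le.2 hx
    have h1 : (fun y : ℝ => if |y| ≤ |x| then (ε + K * x ^ 2)⁻¹ else 0)
        = Set.indicator (Set.Icc (-|x|) |x|) (fun _ => (ε + K * x ^ 2)⁻¹) := by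
      funext y
      by_cases hy : |y| ≤ |x| <;> simp [Set.indicator_apply, Set.mem_Icc, ← abs_le, hy]
    simp only []
    rw [h1, MeasureTheory.setIntegral_indicator measurableSet_Icc,
      Set.inter_eq_self_of_subset_right (Set.Icc_subset_Icc (by linarith) hxr),
      MeasureTheory.setIntegral_const, measureReal_def, Real.volume_Icc]
    rw [ENNReal.toReal_ofReal (by linarith [abs_nonneg x]), smul_eq_mul]
    ring

lemma aux_J' (ε K : ℝ) (hε : 0 < ε) (hK : 0 < K) (r : ℝ) (hr : 0 < r) :
    ∫ p in (Set.Icc (-r) r ×ˢ Set.Icc (-r) r),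
      (if |p.1| ≤ |p.2| then (ε + K * p.2 ^ 2)⁻¹ else 0)
      = 2 * K⁻¹ * Real.log ((ε + K * r ^ 2) / ε) := by
  rw [Measure.volume_eq_prod, ← Measure.prod_restrict]
  have hs := MeasureTheory.integral_prod_swap (μ := volume.restrict (Set.Icc (-r) r))
    (ν := volume.restrict (Set.Icc (-r) r))
    (fun q : ℝ × ℝ => if |q.2| ≤ |q.1| then (ε + K * q.1 ^ 2)⁻¹ else 0)
  simp only [Prod.fst_swap, Prod.snd_swap] at hs
  rw [hs, Measure.prod_restrict, ← Measure.volume_eq_prod]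
  exact aux_J ε K hε hK r hr

lemma aux_cont_f (ε K : ℝ) (hε : 0 < ε) (hK : 0 ≤ K) {E : Type*} [NormedAddCommGroup E] :
    Continuous (fun p : E => (ε + K * ‖p‖ ^ 2)⁻¹) :=
  (continuous_const.add (continuous_const.mul (continuous_norm.pow 2))).inv₀
    (fun p => by show ε + K * ‖p‖ ^ 2 ≠ 0; positivity)

lemma aux_square (ε K : ℝ) (hε : 0 < ε) (hK : 0 < K) (r : ℝ) (hr : 0 < r) :
    2 * K⁻¹ * Real.log ((ε + K * r ^ 2) / ε)
      ≤ ∫ p in (Set.Icc (-r) r ×ˢ Set.Icc (-r) r), (ε + K * ‖p‖ ^ 2)⁻¹ ∧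
    ∫ p in (Set.Icc (-r) r ×ˢ Set.Icc (-r) r), (ε + K * ‖p‖ ^ 2)⁻¹
      ≤ 4 * K⁻¹ * Real.log ((ε + K * r ^ 2) / ε) := by
  have hfin : volume (Set.Icc (-r) r ×ˢ Set.Icc (-r) r) < ⊤ := by
    rw [Measure.volume_eq_prod, Measure.prod_prod]
    exact ENNReal.mul_lt_top (by simp) (by simp)
  have hmeas : MeasurableSet (Set.Icc (-r) r ×ˢ Set.Icc (-r) r) :=
    measurableSet_Icc.prod measurableSet_Icc
  have hint_f : IntegrableOn (fun p : ℝ × ℝ => (ε + K * ‖p‖ ^ 2)⁻¹)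
      (Set.Icc (-r) r ×ˢ Set.Icc (-r) r) := by
    apply Integrable.mono' (g := fun _ => ε⁻¹) (integrableOn_const hfin.ne)
      ((aux_cont_f ε K hε hK.le).aestronglyMeasurable.restrict)
    filter_upwards with p
    rw [Real.norm_eq_abs, abs_of_nonneg (by positivity : (0:ℝ) ≤ (ε + K * ‖p‖ ^ 2)⁻¹)]
    apply inv_anti₀ hε
    nlinarith [sq_nonneg ‖p‖]
  have hint1 := aux_intOn_t1 ε K hε hK.le hfin
  have hint2 : IntegrableOn (fun p : ℝ × ℝ => if |p.1| ≤ |p.2| then (ε + K * p.2 ^ 2)⁻¹ else 0)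
      (Set.Icc (-r) r ×ˢ Set.Icc (-r) r) := by
    apply Integrable.mono' (g := fun _ => ε⁻¹) (integrableOn_const hfin.ne)
    · apply Measurable.aestronglyMeasurable
      apply Measurable.ite
      · exact measurableSet_le (measurable_fst.abs) (measurable_snd.abs)
      · exact ((measurable_const.add (measurable_const.mul (measurable_snd.pow_const 2))).inv)
      · exact measurable_const
    filter_upwards with p
    by_cases h : |p.1| ≤ |p.2|
    · rw [if_pos h, Real.norm_eq_abs,
        abs_of_nonneg (by positivity : (0:ℝ) ≤ (ε + K * p.2 ^ 2)⁻¹)]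
      apply inv_anti₀ hε
      nlinarith [sq_nonneg p.2]
    · rw [if_neg h]; simp [inv_nonneg.2 hε.le]
  have hnorm : ∀ p : ℝ × ℝ, ‖p‖ = max |p.1| |p.2| := by
    intro p; rw [Prod.norm_def, Real.norm_eq_abs, Real.norm_eq_abs]
  constructor
  · rw [← aux_J ε K hε hK r hr]
    apply MeasureTheory.setIntegral_mono hint1 hint_f
    intro p
    simp only []
    by_cases h : |p.2| ≤ |p.1|
    · rw [if_pos h]
      have : ‖p‖ ^ 2 = p.1 ^ 2 := by
        rw [hnorm, max_eq_left h, sq_abs]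
      rw [this]
    · rw [if_neg h]
      positivity
  · have key : ∀ p : ℝ × ℝ, (ε + K * ‖p‖ ^ 2)⁻¹
        ≤ (if |p.2| ≤ |p.1| then (ε + K * p.1 ^ 2)⁻¹ else 0)
          + (if |p.1| ≤ |p.2| then (ε + K * p.2 ^ 2)⁻¹ else 0) := by
      intro p
      by_cases h : |p.2| ≤ |p.1|
      · rw [if_pos h]
        have : ‖p‖ ^ 2 = p.1 ^ 2 := by rw [hnorm, max_eq_left h, sq_abs]
        rw [this]
        have : (0:ℝ) ≤ (if |p.1| ≤ |p.2| then (ε + K * p.2 ^ 2)⁻¹ else 0) := by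
          split <;> positivity
        linarith
      · push_neg at h
        rw [if_neg (not_le.2 h), if_pos h.le]
        have : ‖p‖ ^ 2 = p.2 ^ 2 := by rw [hnorm, max_eq_right h.le, sq_abs]
        rw [this]
        simp
    calc ∫ p in (Set.Icc (-r) r ×ˢ Set.Icc (-r) r), (ε + K * ‖p‖ ^ 2)⁻¹
        ≤ ∫ p in (Set.Icc (-r) r ×ˢ Set.Icc (-r) r),
            ((if |p.2| ≤ |p.1| then (ε + K * p.1 ^ 2)⁻¹ else 0)
            + (if |p.1| ≤ |p.2| then (ε + K * p.2 ^ 2)⁻¹ else 0)) :=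
          MeasureTheory.setIntegral_mono hint_f (hint1.add hint2) key
      _ = 4 * K⁻¹ * Real.log ((ε + K * r ^ 2) / ε) := by
          rw [MeasureTheory.integral_add hint1 hint2, aux_J ε K hε hK r hr,
            aux_J' ε K hε hK r hr]
          ring

lemma aux_ball_eq (ε K : ℝ) (r : ℝ) (z : ℝ × ℝ) :
    ∫ a in Metric.closedBall z r, (ε + K * ‖a - z‖ ^ 2)⁻¹
      = ∫ p in (Set.Icc (-r) r ×ˢ Set.Icc (-r) r), (ε + K * ‖p‖ ^ 2)⁻¹ := by
  have hsq : (Set.Icc (-r) r ×ˢ Set.Icc (-r) r) = Metric.closedBall (0 : ℝ × ℝ) r := by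
    have := closedBall_prod_same (0:ℝ) (0:ℝ) r
    rw [← Prod.mk_zero_zero, ← this, Real.closedBall_eq_Icc]
    norm_num
  rw [hsq, ← MeasureTheory.integral_indicator measurableSet_closedBall,
    ← MeasureTheory.integral_indicator measurableSet_closedBall]
  have : ∀ a : ℝ × ℝ, (Metric.closedBall z r).indicator
      (fun a => (ε + K * ‖a - z‖ ^ 2)⁻¹) a
      = (Metric.closedBall (0 : ℝ × ℝ) r).indicator (fun p => (ε + K * ‖p‖ ^ 2)⁻¹) (a - z) := by
    intro a
    by_cases h : a ∈ Metric.closedBall z r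
    · rw [Set.indicator_of_mem h, Set.indicator_of_mem (by
        rw [Metric.mem_closedBall, dist_zero_right]
        rw [Metric.mem_closedBall, dist_eq_norm] at h
        exact h)]
    · rw [Set.indicator_of_notMem h, Set.indicator_of_notMem (by
        rw [Metric.mem_closedBall, dist_zero_right]
        rw [Metric.mem_closedBall, dist_eq_norm] at h
        exact h)]
  simp_rw [this]
  exact MeasureTheory.integral_sub_right_eq_self
    ((Metric.closedBall (0 : ℝ × ℝ) r).indicator (fun p => (ε + K * ‖p‖ ^ 2)⁻¹)) z

lemma aux_ball_low (ε K : ℝ) (hε : 0 < ε) (hK : 0 < K) (r : ℝ) (hr : 0 < r) (z : ℝ × ℝ) :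
    2 * K⁻¹ * Real.log ((ε + K * r ^ 2) / ε)
      ≤ ∫ a in Metric.closedBall z r, (ε + K * ‖a - z‖ ^ 2)⁻¹ := by
  rw [aux_ball_eq]; exact (aux_square ε K hε hK r hr).1

lemma aux_ball_up (ε K : ℝ) (hε : 0 < ε) (hK : 0 < K) (r : ℝ) (hr : 0 < r) (z : ℝ × ℝ) :
    ∫ a in Metric.closedBall z r, (ε + K * ‖a - z‖ ^ 2)⁻¹
      ≤ 4 * K⁻¹ * Real.log ((ε + K * r ^ 2) / ε) := by
  rw [aux_ball_eq]; exact (aux_square ε K hε hK r hr).2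

end AuxStmt13

/-- `φ₀` is nondegenerate on `Q`: its minimum `m₀` is attained at finitely many points, all in
the open interior of `Q`, and near each minimum point `φ₀ − m₀` is comparable to the squared
distance to that point. -/
def Nondegenerate (Q : Set (ℝ × ℝ)) (φ₀ : ℝ × ℝ → ℝ) (m₀ : ℝ) : Prop :=
  ∃ S : Finset (ℝ × ℝ),
    (↑S : Set (ℝ × ℝ)) = {a ∈ Q | φ₀ a = m₀} ∧
    (↑S : Set (ℝ × ℝ)) ⊆ interior Q ∧
    ∃ r > (0 : ℝ), ∃ c₁ c₂ : ℝ, 0 < c₁ ∧ c₁ ≤ c₂ ∧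
      ∀ aᵢ ∈ S, ∀ a ∈ Q, ‖a - aᵢ‖ ≤ r →
        c₁ * ‖a - aᵢ‖ ^ 2 ≤ φ₀ a - m₀ ∧ φ₀ a - m₀ ≤ c₂ * ‖a - aᵢ‖ ^ 2

set_option maxHeartbeats 1600000 in
/-- If `φ₀` is nondegenerate, there exist `c, C > 0` and `τ₀ ∈ (0,τ*)` with
`c·log(1/(τ*−τ)) ≤ F(τ) ≤ C·log(1/(τ*−τ))` for all `τ ∈ (τ₀,τ*)`. -/
theorem stmt_13
    (L : ℝ) (hL : 0 < L)
    (Q : Set (ℝ × ℝ)) (hQ : Q = Set.Icc (0, 0) (L, L))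
    (φ₀ : ℝ × ℝ → ℝ) (hφcont : ContinuousOn φ₀ Q)
    (hmean : ∫ a in Q, φ₀ a = 0)
    (m₀ : ℝ) (hmin : ∀ a ∈ Q, m₀ ≤ φ₀ a) (hatt : ∃ a ∈ Q, φ₀ a = m₀)
    (hm₀ : m₀ < 0)
    (τstar : ℝ) (hτstar : τstar = -1 / m₀)
    (F : ℝ → ℝ)
    (hF : ∀ τ ∈ Set.Ico 0 τstar, F τ = (1 / L ^ 2) * ∫ a in Q, 1 / (1 + τ * φ₀ a))
    (hnd : Nondegenerate Q φ₀ m₀) :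
    ∃ c > (0 : ℝ), ∃ C > (0 : ℝ), ∃ τ₀ ∈ Set.Ioo 0 τstar,
      ∀ τ ∈ Set.Ioo τ₀ τstar,
        c * Real.log (1 / (τstar - τ)) ≤ F τ ∧
        F τ ≤ C * Real.log (1 / (τstar - τ)) := by
  obtain ⟨S, hS, hSint, r, hrpos, c₁, c₂, hc₁, hc₁₂, hbd⟩ := hnd
  have hc₂ : 0 < c₂ := lt_of_lt_of_le hc₁ hc₁₂
  have hτs : 0 < τstar := by
    rw [hτstar]
    exact div_pos_iff.2 (Or.inr ⟨by norm_num, hm₀⟩)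
  have hm₀' : m₀ = -1 / τstar := by
    rw [hτstar]; field_simp
  have hkey : ∀ τ : ℝ, 1 + τ * m₀ = (τstar - τ) / τstar := by
    intro τ; rw [hm₀']; field_simp; ring
  -- basic facts about Q
  have hQmeas : MeasurableSet Q := hQ ▸ measurableSet_Icc
  have hQcomp : IsCompact Q := hQ ▸ isCompact_Icc
  have hQfin : volume Q < ⊤ := hQcomp.measure_lt_top
  have hQvol : (volume Q).toReal = L ^ 2 := by
    rw [hQ, Set.Icc_prod_eq, Measure.volume_eq_prod, Measure.prod_prod]
    simp [Real.volume_Icc, ENNReal.toReal_mul, ENNReal.toReal_ofReal hL.le]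
    ring
  -- the distinguished minimum point and its ball
  obtain ⟨a₀, ha₀Q, ha₀⟩ := hatt
  have ha₀S : a₀ ∈ (S : Set (ℝ × ℝ)) := by rw [hS]; exact ⟨ha₀Q, ha₀⟩
  have ha₀S' : a₀ ∈ S := ha₀S
  obtain ⟨η, hη, hballη⟩ := Metric.isOpen_iff.mp isOpen_interior a₀ (hSint ha₀S)
  set ρ : ℝ := min (η / 2) r with hρdef
  have hρpos : 0 < ρ := lt_min (by linarith) hrpos
  have hρr : ρ ≤ r := min_le_right _ _
  have hρQ : Metric.closedBall a₀ ρ ⊆ Q :=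
    (Metric.closedBall_subset_ball (lt_of_le_of_lt (min_le_left _ _) (half_lt_self hη))).trans
      (hballη.trans interior_subset)
  -- the gap δ away from the minimum points
  obtain ⟨δ, hδpos, hδ⟩ : ∃ δ > (0 : ℝ), ∀ a ∈ Q, (∀ i ∈ S, r ≤ ‖a - i‖) → δ ≤ φ₀ a - m₀ := by
    set T : Set (ℝ × ℝ) := Q \ ⋃ i ∈ S, Metric.ball i r with hTdef
    have hTmem : ∀ a, (a ∈ Q ∧ ∀ i ∈ S, r ≤ ‖a - i‖) → a ∈ T := by
      rintro a ⟨haQ, hfar⟩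
      refine ⟨haQ, ?_⟩
      simp only [Set.mem_iUnion, Metric.mem_ball, not_exists]
      intro i hi
      rw [dist_eq_norm]
      exact not_lt.2 (hfar i hi)
    have hTQ : T ⊆ Q := Set.diff_subset
    have hTcomp : IsCompact T :=
      hQcomp.diff (isOpen_biUnion fun i _ => Metric.isOpen_ball)
    by_cases hT : T.Nonempty
    · obtain ⟨astar, haT, hamin⟩ := hTcomp.exists_isMinOn hT
        ((hφcont.mono hTQ).sub continuousOn_const :
          ContinuousOn (fun a => φ₀ a - m₀) T)
      refine ⟨φ₀ astar - m₀, ?_, fun a haQ hfar => hamin (hTmem a ⟨haQ, hfar⟩)⟩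
      rcases lt_or_eq_of_le (hmin astar (hTQ haT)) with h | h
      · linarith
      · exfalso
        have haS : astar ∈ (S : Set (ℝ × ℝ)) := by rw [hS]; exact ⟨hTQ haT, h.symm⟩
        have := haT.2
        apply this
        exact Set.mem_biUnion haS (Metric.mem_ball_self hrpos)
    · refine ⟨1, one_pos, fun a haQ hfar => ?_⟩
      exact absurd (Set.nonempty_of_mem (hTmem a ⟨haQ, hfar⟩)) hT
  -- constants
  set K : ℝ := τstar * c₂ with hKdef
  have hK : 0 < K := mul_pos hτs hc₂
  set K₁ : ℝ := τstar / 2 * c₁ with hK₁def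
  have hK₁ : 0 < K₁ := mul_pos (by linarith) hc₁
  set A₀ : ℝ := Real.log (K * ρ ^ 2) + Real.log τstar with hA₀def
  set B₁ : ℝ := Real.log (1 + K₁ * r ^ 2) + |Real.log τstar| with hB₁def
  have hB₁0 : 0 ≤ B₁ := by
    have h1 : 0 ≤ K₁ * r ^ 2 := by positivity
    exact add_nonneg (Real.log_nonneg (by linarith only [h1])) (abs_nonneg _)
  set M : ℝ := 2 * |A₀| + 2 with hMdef
  have hM0 : 0 < M := by positivity
  set d : ℝ := τstar / 2 * δ with hddef
  have hd : 0 < d := mul_pos (by linarith) hδpos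
  set N : ℝ := (S.card : ℝ) with hNdef
  clear_value K K₁ A₀ B₁ M d N
  have hN1 : 1 ≤ N := by
    have h1 : 1 ≤ S.card := Finset.card_pos.2 ⟨a₀, ha₀S'⟩
    rw [hNdef]
    exact_mod_cast h1
  refine ⟨1 / (L ^ 2 * K), by positivity,
    4 * N / (L ^ 2 * K₁) * (1 + B₁) + d⁻¹, by positivity,
    τstar - min (τstar / 2) (Real.exp (-M)), ⟨?_, ?_⟩, ?_⟩
  · rcases le_total (τstar / 2) (Real.exp (-M)) with h | h
    · rw [min_eq_left h]; linarith
    · rw [min_eq_right h]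
      have := Real.exp_pos (-M)
      linarith
  · have h1 : 0 < min (τstar / 2) (Real.exp (-M)) := lt_min (by linarith) (Real.exp_pos _)
    linarith
  intro τ hτ
  obtain ⟨hτl, hτu⟩ := hτ
  set t : ℝ := τstar - τ with htdef
  have ht0 : 0 < t := by simp only [htdef]; linarith only [hτu]
  have htmin : t < min (τstar / 2) (Real.exp (-M)) := by simp only [htdef]; linarith only [hτl]
  have hth : t < τstar / 2 := lt_of_lt_of_le htmin (min_le_left _ _)
  have htM : t < Real.exp (-M) := lt_of_lt_of_le htmin (min_le_right _ _)
  have hτhalf : τstar / 2 < τ := by simp only [htdef] at hth; linarith only [hth]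
  have hτpos : 0 < τ := by linarith only [hτhalf, hτs]
  have hτlt : τ < τstar := hτu
  -- the small parameter e
  set e : ℝ := 1 + τ * m₀ with hedef
  clear_value t e
  have he : e = t / τstar := by rw [hedef, hkey τ, htdef]
  have he0 : 0 < e := by rw [he]; positivity
  have hehalf : e < 1 / 2 := by
    rw [he, div_lt_iff₀ hτs]
    linarith only [hth]
  -- the logarithm is large
  have hlogt : Real.log (1 / t) = -Real.log t := by rw [one_div, Real.log_inv]
  have hlogM : M < Real.log (1 / t) := by
    rw [hlogt]
    have h7 := Real.log_lt_log ht0 htM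
    rw [Real.log_exp] at h7
    linarith only [h7]
  have hlog2 : 2 ≤ Real.log (1 / t) := by
    have h8 : 0 ≤ 2 * |A₀| := by positivity
    simp only [hMdef] at hlogM
    linarith only [h8, hlogM]
  have hlogA : 2 * |A₀| ≤ Real.log (1 / t) := by
    simp only [hMdef] at hlogM; linarith only [hlogM]
  -- positivity of the denominator on Q
  have hden : ∀ a ∈ Q, 0 < 1 + τ * φ₀ a := by
    intro a ha
    have h1 := hmin a ha
    have h2 : 0 ≤ τ * (φ₀ a - m₀) := mul_nonneg hτpos.le (by linarith only [h1])
    have h3 : 1 + τ * φ₀ a = e + τ * (φ₀ a - m₀) := by rw [hedef]; ring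
    linarith only [h2, h3, he0]
  -- the integrand
  set f : ℝ × ℝ → ℝ := fun a => (1 + τ * φ₀ a)⁻¹ with hfdef
  have hfQ : IntegrableOn f Q := by
    apply ContinuousOn.integrableOn_compact hQcomp
    exact (continuousOn_const.add (continuousOn_const.mul hφcont)).inv₀
      fun a ha => (hden a ha).ne'
  have hfnonneg : ∀ a ∈ Q, 0 ≤ f a := fun a ha => inv_nonneg.2 (hden a ha).le
  have hFτ : F τ = 1 / L ^ 2 * ∫ a in Q, f a := by
    rw [hF τ ⟨hτpos.le, hτlt⟩]
    simp only [hfdef, one_div]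
  -- decompose log((e + X)/e)
  have hloge : Real.log e = Real.log t - Real.log τstar := by
    rw [he, Real.log_div ht0.ne' hτs.ne']
  constructor
  · -- LOWER BOUND
    have hcontg : Continuous (fun a : ℝ × ℝ => (e + K * ‖a - a₀‖ ^ 2)⁻¹) :=
      (aux_cont_f e K he0 hK.le).comp (continuous_sub_right a₀)
    have hint_g : IntegrableOn (fun a : ℝ × ℝ => (e + K * ‖a - a₀‖ ^ 2)⁻¹)
        (Metric.closedBall a₀ ρ) :=
      hcontg.continuousOn.integrableOn_compact (isCompact_closedBall a₀ ρ)
    have hptB : ∀ a ∈ Metric.closedBall a₀ ρ, (e + K * ‖a - a₀‖ ^ 2)⁻¹ ≤ f a := by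
      intro a hmem
      have haQ : a ∈ Q := hρQ hmem
      have hna : ‖a - a₀‖ ≤ ρ := by
        rw [Metric.mem_closedBall, dist_eq_norm] at hmem; exact hmem
      have hup := (hbd a₀ ha₀S' a haQ (hna.trans hρr)).2
      have hkey2 : 1 + τ * φ₀ a ≤ e + K * ‖a - a₀‖ ^ 2 := by
        have e1 : 1 + τ * φ₀ a = e + τ * (φ₀ a - m₀) := by rw [hedef]; ring
        have e2 : τ * (φ₀ a - m₀) ≤ τ * (c₂ * ‖a - a₀‖ ^ 2) :=
          mul_le_mul_of_nonneg_left hup hτpos.le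
        have e3 : τ * (c₂ * ‖a - a₀‖ ^ 2) ≤ K * ‖a - a₀‖ ^ 2 := by
          rw [hKdef, show τstar * c₂ * ‖a - a₀‖ ^ 2 = τstar * (c₂ * ‖a - a₀‖ ^ 2) from by ring]
          exact mul_le_mul_of_nonneg_right hτlt.le (by positivity)
        linarith only [e1, e2, e3]
      exact inv_anti₀ (hden a haQ) hkey2
    have h1 := aux_ball_low e K he0 hK ρ hρpos a₀
    have h2 : (∫ a in Metric.closedBall a₀ ρ, (e + K * ‖a - a₀‖ ^ 2)⁻¹)
        ≤ ∫ a in Metric.closedBall a₀ ρ, f a :=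
      setIntegral_mono_on hint_g (hfQ.mono_set hρQ) measurableSet_closedBall hptB
    have h3 : (∫ a in Metric.closedBall a₀ ρ, f a) ≤ ∫ a in Q, f a :=
      setIntegral_mono_set hfQ ((ae_restrict_iff' hQmeas).2 (ae_of_all _ hfnonneg))
        (HasSubset.Subset.eventuallyLE hρQ)
    have hlK : Real.log (K * ρ ^ 2 / e) ≤ Real.log ((e + K * ρ ^ 2) / e) := by
      have harg : K * ρ ^ 2 / e ≤ (e + K * ρ ^ 2) / e := by
        gcongr
        linarith only [he0]
      exact Real.log_le_log (by positivity) harg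
    have hlsplit : Real.log (K * ρ ^ 2 / e) = Real.log (K * ρ ^ 2) - Real.log e :=
      Real.log_div (by positivity) he0.ne'
    have hX : (1 / 2) * Real.log (1 / t) ≤ Real.log ((e + K * ρ ^ 2) / e) := by
      have h5 : Real.log (K * ρ ^ 2 / e) = Real.log (1 / t) + A₀ := by
        rw [hlsplit, hloge, hlogt, hA₀def]; ring
      have h6 := neg_abs_le A₀
      linarith only [hlK, h5, h6, hlogA]
    rw [hFτ]
    calc 1 / (L ^ 2 * K) * Real.log (1 / t)
        = 1 / L ^ 2 * (2 * K⁻¹ * ((1 / 2) * Real.log (1 / t))) := by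
          field_simp
      _ ≤ 1 / L ^ 2 * (2 * K⁻¹ * Real.log ((e + K * ρ ^ 2) / e)) :=
          mul_le_mul_of_nonneg_left (mul_le_mul_of_nonneg_left hX (by positivity))
            (by positivity)
      _ ≤ 1 / L ^ 2 * ∫ a in Metric.closedBall a₀ ρ, (e + K * ‖a - a₀‖ ^ 2)⁻¹ :=
          mul_le_mul_of_nonneg_left h1 (by positivity)
      _ ≤ 1 / L ^ 2 * ∫ a in Metric.closedBall a₀ ρ, f a :=
          mul_le_mul_of_nonneg_left h2 (by positivity)
      _ ≤ 1 / L ^ 2 * ∫ a in Q, f a :=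
          mul_le_mul_of_nonneg_left h3 (by positivity)
  · -- UPPER BOUND
    set g : (ℝ × ℝ) → (ℝ × ℝ) → ℝ :=
      fun i => (Metric.closedBall i r).indicator (fun a => (e + K₁ * ‖a - i‖ ^ 2)⁻¹) with hgdef
    have hgcont : ∀ i : ℝ × ℝ, Continuous (fun a : ℝ × ℝ => (e + K₁ * ‖a - i‖ ^ 2)⁻¹) :=
      fun i => (aux_cont_f e K₁ he0 hK₁.le).comp (continuous_sub_right i)
    have hgnonneg : ∀ i a, 0 ≤ g i a := by
      intro i a
      rw [hgdef]
      exact Set.indicator_nonneg (fun a _ => by positivity) a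
    have hgint : ∀ i : ℝ × ℝ, IntegrableOn (g i) Q := by
      intro i
      rw [hgdef]
      exact ((hgcont i).continuousOn.integrableOn_compact hQcomp).indicator
        measurableSet_closedBall
    have hptU : ∀ a ∈ Q, f a ≤ (∑ i ∈ S, g i a) + d⁻¹ := by
      intro a haQ
      have hsumnn : 0 ≤ ∑ i ∈ S, g i a := Finset.sum_nonneg fun i _ => hgnonneg i a
      have hd' : (0:ℝ) ≤ d⁻¹ := inv_nonneg.2 hd.le
      by_cases hcase : ∃ i ∈ S, ‖a - i‖ ≤ r
      · obtain ⟨i, hiS, hir⟩ := hcase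
        have hmem : a ∈ Metric.closedBall i r := by
          rw [Metric.mem_closedBall, dist_eq_norm]; exact hir
        have hlow := (hbd i hiS a haQ hir).1
        have hfle : f a ≤ (e + K₁ * ‖a - i‖ ^ 2)⁻¹ := by
          apply inv_anti₀ (by positivity)
          have e1 : 1 + τ * φ₀ a = e + τ * (φ₀ a - m₀) := by rw [hedef]; ring
          have e3 : τ * (c₁ * ‖a - i‖ ^ 2) ≤ τ * (φ₀ a - m₀) :=
            mul_le_mul_of_nonneg_left hlow hτpos.le
          have e4 : K₁ * ‖a - i‖ ^ 2 ≤ τ * (c₁ * ‖a - i‖ ^ 2) := by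
            rw [hK₁def, show τstar / 2 * c₁ * ‖a - i‖ ^ 2
              = τstar / 2 * (c₁ * ‖a - i‖ ^ 2) from by ring]
            exact mul_le_mul_of_nonneg_right hτhalf.le (by positivity)
          linarith only [e1, e3, e4]
        have hgi : g i a = (e + K₁ * ‖a - i‖ ^ 2)⁻¹ := by
          rw [hgdef]; exact Set.indicator_of_mem hmem _
        have hsingle : g i a ≤ ∑ j ∈ S, g j a :=
          Finset.single_le_sum (fun j _ => hgnonneg j a) hiS
        linarith only [hfle, hgi, hsingle, hd']
      · push_neg at hcase
        have hgap := hδ a haQ (fun i hi => (hcase i hi).le)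
        have hfle : f a ≤ d⁻¹ := by
          apply inv_anti₀ hd
          have e1 : 1 + τ * φ₀ a = e + τ * (φ₀ a - m₀) := by rw [hedef]; ring
          have e2 : d ≤ τ * (φ₀ a - m₀) := by
            rw [hddef]
            exact mul_le_mul hτhalf.le hgap hδpos.le hτpos.le
          linarith only [e1, e2, he0]
        linarith only [hfle, hsumnn, hd']
    have hconst : IntegrableOn (fun _ : ℝ × ℝ => d⁻¹) Q := integrableOn_const hQfin.ne
    have hsumint : IntegrableOn (fun a => ∑ i ∈ S, g i a) Q :=
      integrable_finset_sum _ (fun i _ => hgint i)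
    have hmono := setIntegral_mono_on hfQ (hsumint.add hconst) hQmeas hptU
    have hsplit : (∫ a in Q, ((∑ i ∈ S, g i a) + d⁻¹))
        = (∑ i ∈ S, ∫ a in Q, g i a) + d⁻¹ * L ^ 2 := by
      rw [integral_add hsumint hconst, integral_finset_sum _ (fun i _ => hgint i),
        setIntegral_const, smul_eq_mul, measureReal_def, hQvol]
      ring
    have hball_bound : ∀ i ∈ S,
        (∫ a in Q, g i a) ≤ 4 * K₁⁻¹ * Real.log ((e + K₁ * r ^ 2) / e) := by
      intro i hiS
      have h1 : ∫ a in Q, g i a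
          = ∫ a in Q ∩ Metric.closedBall i r, (e + K₁ * ‖a - i‖ ^ 2)⁻¹ := by
        rw [hgdef]; exact setIntegral_indicator measurableSet_closedBall
      have h2 : (∫ a in Q ∩ Metric.closedBall i r, (e + K₁ * ‖a - i‖ ^ 2)⁻¹)
          ≤ ∫ a in Metric.closedBall i r, (e + K₁ * ‖a - i‖ ^ 2)⁻¹ :=
        setIntegral_mono_set
          ((hgcont i).continuousOn.integrableOn_compact (isCompact_closedBall i r))
          (ae_of_all _ fun a => by positivity)
          (HasSubset.Subset.eventuallyLE Set.inter_subset_right)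
      have h3 := aux_ball_up e K₁ he0 hK₁ r hrpos i
      rw [h1]
      exact h2.trans h3
    have hsum_le : (∑ i ∈ S, ∫ a in Q, g i a)
        ≤ N * (4 * K₁⁻¹ * Real.log ((e + K₁ * r ^ 2) / e)) := by
      calc (∑ i ∈ S, ∫ a in Q, g i a)
          ≤ ∑ _i ∈ S, 4 * K₁⁻¹ * Real.log ((e + K₁ * r ^ 2) / e) :=
            Finset.sum_le_sum hball_bound
        _ = N * (4 * K₁⁻¹ * Real.log ((e + K₁ * r ^ 2) / e)) := by
            rw [Finset.sum_const, nsmul_eq_mul, hNdef]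
    have hlogU : Real.log ((e + K₁ * r ^ 2) / e) ≤ Real.log (1 / t) + B₁ := by
      have h1 : Real.log ((e + K₁ * r ^ 2) / e)
          = Real.log (e + K₁ * r ^ 2) - Real.log e := Real.log_div (by positivity) he0.ne'
      have h2 : Real.log (e + K₁ * r ^ 2) ≤ Real.log (1 + K₁ * r ^ 2) :=
        Real.log_le_log (by positivity) (by linarith only [hehalf])
      have h3 : Real.log τstar ≤ |Real.log τstar| := le_abs_self _
      rw [hB₁def]
      linarith only [h1, h2, h3, hloge, hlogt]
    have hN0 : (0:ℝ) ≤ N := by linarith only [hN1]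
    have hP0 : (0:ℝ) ≤ 4 * N / (L ^ 2 * K₁) := div_nonneg (by linarith only [hN0]) (by positivity)
    have hX1 : (1:ℝ) ≤ Real.log (1 / t) := by linarith only [hlog2]
    rw [hFτ]
    calc 1 / L ^ 2 * ∫ a in Q, f a
        ≤ 1 / L ^ 2 * ((∑ i ∈ S, ∫ a in Q, g i a) + d⁻¹ * L ^ 2) :=
          mul_le_mul_of_nonneg_left (le_of_le_of_eq hmono hsplit) (by positivity)
      _ ≤ 1 / L ^ 2 * (N * (4 * K₁⁻¹ * (Real.log (1 / t) + B₁)) + d⁻¹ * L ^ 2) := by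
          apply mul_le_mul_of_nonneg_left _ (by positivity)
          have h4 : N * (4 * K₁⁻¹ * Real.log ((e + K₁ * r ^ 2) / e))
              ≤ N * (4 * K₁⁻¹ * (Real.log (1 / t) + B₁)) :=
            mul_le_mul_of_nonneg_left
              (mul_le_mul_of_nonneg_left hlogU (by positivity)) hN0
          linarith only [hsum_le, h4]
      _ ≤ (4 * N / (L ^ 2 * K₁) * (1 + B₁) + d⁻¹) * Real.log (1 / t) := by
          have e1 : 1 / L ^ 2 * (N * (4 * K₁⁻¹ * (Real.log (1 / t) + B₁)) + d⁻¹ * L ^ 2)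
              = 4 * N / (L ^ 2 * K₁) * (Real.log (1 / t) + B₁) + d⁻¹ := by
            field_simp
          have e2 : Real.log (1 / t) + B₁ ≤ (1 + B₁) * Real.log (1 / t) := by
            have h5 : B₁ * 1 ≤ B₁ * Real.log (1 / t) :=
              mul_le_mul_of_nonneg_left hX1 hB₁0
            nlinarith only [h5]
          have e3 : 4 * N / (L ^ 2 * K₁) * (Real.log (1 / t) + B₁)
              ≤ 4 * N / (L ^ 2 * K₁) * ((1 + B₁) * Real.log (1 / t)) :=
            mul_le_mul_of_nonneg_left e2 hP0
          have e4 : d⁻¹ * 1 ≤ d⁻¹ * Real.log (1 / t) :=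
            mul_le_mul_of_nonneg_left hX1 (inv_nonneg.2 hd.le)
          have e5 : (4 * N / (L ^ 2 * K₁) * (1 + B₁) + d⁻¹) * Real.log (1 / t)
              = 4 * N / (L ^ 2 * K₁) * ((1 + B₁) * Real.log (1 / t))
                + d⁻¹ * Real.log (1 / t) := by ring
          rw [e1]
          nlinarith only [e3, e4, e5]
end

section
/- If φ₀ is nondegenerate, then there exist constants c, C > 0 and τ₀ ∈ (0,τ*) such that for all τ ∈ (τ₀,τ*): c·(log(1/(τ*−τ)))⁻² ≤ α(τ) ≤ C·(log(1/(τ*−τ)))⁻²; in particular α(τ) → 0 as τ → τ*⁻. -/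
open MeasureTheory Real Set Filter

open Metric

section AUX


lemma vol_ball (a : ℝ×ℝ) (s : ℝ) (hs : 0 ≤ s) :
    volume (Metric.ball a s) = ENNReal.ofReal (4 * s^2) := by
  rw [show Metric.ball a s = Metric.ball a.1 s ×ˢ Metric.ball a.2 s from (ball_prod_same a.1 a.2 s).symm,
    MeasureTheory.Measure.volume_eq_prod, Measure.prod_prod, Real.volume_ball, Real.volume_ball,
    ← ENNReal.ofReal_mul (by linarith)]
  ring_nf

lemma cont_aux (ε K : ℝ) (a : ℝ×ℝ) (hε : 0 < ε) (hK : 0 ≤ K) :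
    Continuous (fun x : ℝ×ℝ => 1/(ε + K*‖x-a‖^2)) := by
  apply continuous_const.div (by continuity)
  intro x
  have : 0 ≤ K*‖x-a‖^2 := by positivity
  nlinarith

lemma intble_aux (ε K s : ℝ) (a b : ℝ×ℝ) (hε : 0 < ε) (hK : 0 ≤ K) :
    IntegrableOn (fun x : ℝ×ℝ => 1/(ε + K*‖x-a‖^2)) (Metric.ball b s) :=
  ((cont_aux ε K a hε hK).locallyIntegrable.integrableOn_isCompact
    (isCompact_closedBall b s)).mono_set ball_subset_closedBall

lemma vol_annulus (a : ℝ×ℝ) (s : ℝ) (hs : 0 ≤ s) :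
    volume (Metric.ball a s \ Metric.ball a (s/2)) = ENNReal.ofReal (3 * s^2) := by
  rw [measure_diff (ball_subset_ball (by linarith)) measurableSet_ball.nullMeasurableSet
      (by rw [vol_ball a _ (by linarith)]; exact ENNReal.ofReal_ne_top),
    vol_ball a s hs, vol_ball a _ (by linarith), ← ENNReal.ofReal_sub _ (by positivity)]
  congr 1; ring

lemma ball_int_lower (ε K ρ : ℝ) (a : ℝ×ℝ) (hε : 0 < ε) (hK : 0 < K) (hρ : 0 < ρ)
    (N : ℕ) (hN : ∀ j < N, ε ≤ K * ρ^2 * ((4:ℝ)⁻¹)^j) :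
    (N:ℝ) * (3/(2*K)) ≤ ∫ x in Metric.ball a ρ, 1/(ε + K*‖x-a‖^2) := by
  set f : ℝ×ℝ → ℝ := fun x => 1/(ε + K*‖x-a‖^2) with hf
  have hρj : ∀ j : ℕ, 0 < ρ * ((2:ℝ)⁻¹)^j := fun j => by positivity
  set I : ℕ → ℝ := fun j => ∫ x in Metric.ball a (ρ * ((2:ℝ)⁻¹)^j), f x with hI
  have hInn : ∀ j, 0 ≤ I j := fun j => setIntegral_nonneg measurableSet_ball (fun x _ => by
    have : 0 ≤ K*‖x-a‖^2 := by positivity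
    positivity)
  have step : ∀ j : ℕ, ε ≤ K * ρ^2 * ((4:ℝ)⁻¹)^j → 3/(2*K) + I (j+1) ≤ I j := by
    intro j hj
    set s := ρ * ((2:ℝ)⁻¹)^j with hsdef
    have hs : 0 < s := hρj j
    have hs2 : ρ * ((2:ℝ)⁻¹)^(j+1) = s/2 := by rw [hsdef]; ring
    have hs2' : s^2 = ρ^2 * ((4:ℝ)⁻¹)^j := by
      rw [hsdef, mul_pow, ← pow_mul, mul_comm j 2, pow_mul]
      norm_num
    have hKs : ε ≤ K * s^2 := by rw [hs2', ← mul_assoc]; exact hj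
    have hsub : Metric.ball a (s/2) ⊆ Metric.ball a s := ball_subset_ball (by linarith)
    have hint : IntegrableOn f (Metric.ball a s) := intble_aux ε K s a a hε hK.le
    have hdiff := integral_diff (measurableSet_ball (x := a) (ε := s/2)) hint hsub
    have hA : 3/(2*K) ≤ ∫ x in Metric.ball a s \ Metric.ball a (s/2), f x := by
      have hlow : ∀ x ∈ Metric.ball a s \ Metric.ball a (s/2), 1/(2*K*s^2) ≤ f x := by
        intro x hx
        have hxs : ‖x - a‖ < s := by
          have := hx.1; rw [Metric.mem_ball, dist_eq_norm] at this; exact this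
        have h1 : 0 ≤ K*‖x-a‖^2 := by positivity
        have hn2 : ‖x-a‖^2 ≤ s^2 := by nlinarith [norm_nonneg (x-a)]
        have h2 : ε + K*‖x-a‖^2 ≤ 2*K*s^2 := by nlinarith [mul_le_mul_of_nonneg_left hn2 hK.le]
        rw [hf]
        apply one_div_le_one_div_of_le (by positivity) h2
      have := setIntegral_ge_of_const_le (measurableSet_ball.diff measurableSet_ball)
        (by rw [vol_annulus a s hs.le]; exact ENNReal.ofReal_ne_top) hlow
        (hint.mono_set diff_subset)
      rw [measureReal_def, vol_annulus a s hs.le, ENNReal.toReal_ofReal (by positivity), smul_eq_mul,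
        mul_comm (3 * s ^ 2)] at this
      calc 3/(2*K) = 1/(2*K*s^2) * (3*s^2) := by field_simp
        _ ≤ _ := this
    have : I j = (∫ x in Metric.ball a s \ Metric.ball a (s/2), f x) + I (j+1) := by
      rw [hI]; simp only []; rw [hs2, hdiff]; ring
    rw [this]; linarith
  have main : ∀ N : ℕ, (∀ j < N, ε ≤ K * ρ^2 * ((4:ℝ)⁻¹)^j) → (N:ℝ) * (3/(2*K)) + I N ≤ I 0 := by
    intro N
    induction N with
    | zero => intro _; simp
    | succ n ih =>
      intro h
      have h1 := ih (fun j hj => h j (by omega))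
      have h2 := step n (h n (by omega))
      push_cast
      linarith
  have := main N hN
  have h0 : I 0 = ∫ x in Metric.ball a ρ, f x := by rw [hI]; norm_num
  rw [← h0]
  linarith [hInn N]

lemma ball_int_upper (ε K r : ℝ) (a : ℝ×ℝ) (hε : 0 < ε) (hK : 0 < K) (hr : 0 < r)
    (M : ℕ) (hM : r^2 * ((4:ℝ)⁻¹)^M ≤ ε) :
    ∫ x in Metric.ball a r, 1/(ε + K*‖x-a‖^2) ≤ (M:ℝ) * (12/K) + 4 := by
  set f : ℝ×ℝ → ℝ := fun x => 1/(ε + K*‖x-a‖^2) with hf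
  set I : ℕ → ℝ := fun j => ∫ x in Metric.ball a (r * ((2:ℝ)⁻¹)^j), f x with hI
  have step : ∀ j : ℕ, I j ≤ 12/K + I (j+1) := by
    intro j
    set s := r * ((2:ℝ)⁻¹)^j with hsdef
    have hs : 0 < s := by positivity
    have hs2 : r * ((2:ℝ)⁻¹)^(j+1) = s/2 := by rw [hsdef]; ring
    have hsub : Metric.ball a (s/2) ⊆ Metric.ball a s := ball_subset_ball (by linarith)
    have hint : IntegrableOn f (Metric.ball a s) := intble_aux ε K s a a hε hK.le
    have hdiff := integral_diff (measurableSet_ball (x := a) (ε := s/2)) hint hsub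
    have hvolA : volume (Metric.ball a s \ Metric.ball a (s/2)) = ENNReal.ofReal (3*s^2) :=
      vol_annulus a s hs.le
    have hA : (∫ x in Metric.ball a s \ Metric.ball a (s/2), f x) ≤ 12/K := by
      have hup : ∀ x ∈ Metric.ball a s \ Metric.ball a (s/2), f x ≤ 4/(K*s^2) := by
        intro x hx
        have hxs : s/2 ≤ ‖x - a‖ := by
          have := hx.2; rw [Metric.mem_ball, dist_eq_norm, not_lt] at this; exact this
        have hn2 : (s/2)^2 ≤ ‖x-a‖^2 := by nlinarith [norm_nonneg (x-a)]
        have h2 : K*(s/2)^2 ≤ ε + K*‖x-a‖^2 := by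
          nlinarith [mul_le_mul_of_nonneg_left hn2 hK.le]
        rw [hf]
        calc (1:ℝ)/(ε + K*‖x-a‖^2) ≤ 1/(K*(s/2)^2) :=
              one_div_le_one_div_of_le (by positivity) h2
          _ = 4/(K*s^2) := by field_simp; ring
      have hmono := setIntegral_mono_on (hint.mono_set diff_subset)
        (integrableOn_const (by rw [hvolA]; exact ENNReal.ofReal_ne_top))
        (measurableSet_ball.diff measurableSet_ball) hup
      rw [setIntegral_const, measureReal_def, hvolA, ENNReal.toReal_ofReal (by positivity), smul_eq_mul] at hmono
      calc (∫ x in Metric.ball a s \ Metric.ball a (s/2), f x) ≤ 3*s^2 * (4/(K*s^2)) := hmono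
        _ = 12/K := by field_simp; ring
    have heq : I j = (∫ x in Metric.ball a s \ Metric.ball a (s/2), f x) + I (j+1) := by
      rw [hI]; simp only []; rw [hs2, hdiff]; ring
    rw [heq]; linarith
  have main : ∀ N : ℕ, I 0 ≤ (N:ℝ) * (12/K) + I N := by
    intro N
    induction N with
    | zero => simp
    | succ n ih =>
      have := step n
      push_cast
      linarith
  have hterm : I M ≤ 4 := by
    have hsM : 0 < r * ((2:ℝ)⁻¹)^M := by positivity
    have hsM2 : (r * ((2:ℝ)⁻¹)^M)^2 = r^2 * ((4:ℝ)⁻¹)^M := by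
      rw [mul_pow, ← pow_mul, mul_comm M 2, pow_mul]; norm_num
    have hup : ∀ x ∈ Metric.ball a (r * ((2:ℝ)⁻¹)^M), f x ≤ 1/ε := by
      intro x _
      rw [hf]
      apply one_div_le_one_div_of_le hε
      have : 0 ≤ K*‖x-a‖^2 := by positivity
      linarith
    have hmono := setIntegral_mono_on (intble_aux ε K _ a a hε hK.le)
      (integrableOn_const (by rw [vol_ball a _ hsM.le]; exact ENNReal.ofReal_ne_top))
      measurableSet_ball hup
    rw [setIntegral_const, measureReal_def, vol_ball a _ hsM.le, ENNReal.toReal_ofReal (by positivity),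
      smul_eq_mul] at hmono
    calc I M ≤ 4 * (r * ((2:ℝ)⁻¹)^M)^2 * (1/ε) := hmono
      _ = 4 * (r^2 * ((4:ℝ)⁻¹)^M) / ε := by rw [hsM2]; ring
      _ ≤ 4 := by rw [div_le_iff₀ hε]; linarith
  have h0 : I 0 = ∫ x in Metric.ball a r, f x := by rw [hI]; norm_num
  rw [← h0]
  linarith [main M]

lemma dyadic_N (B ε : ℝ) (hB : 0 < B) (hε : 0 < ε) (hεB : ε ≤ B) :
    ∃ N : ℕ, Real.logb 4 (B/ε) ≤ (N:ℝ) ∧ ∀ j < N, ε ≤ B * ((4:ℝ)⁻¹)^j := by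
  have hy0 : 0 ≤ Real.logb 4 (B/ε) :=
    Real.logb_nonneg (by norm_num) ((le_div_iff₀ hε).2 (by linarith))
  refine ⟨⌊Real.logb 4 (B/ε)⌋₊ + 1, ?_, ?_⟩
  · push_cast; exact (Nat.lt_floor_add_one _).le
  · intro j hj
    have hj' : (j:ℝ) ≤ Real.logb 4 (B/ε) := by
      have h1 : j ≤ ⌊Real.logb 4 (B/ε)⌋₊ := by omega
      exact le_trans (Nat.cast_le.2 h1) (Nat.floor_le hy0)
    have h4 : ((4:ℝ))^(j:ℕ) ≤ B/ε := by
      calc ((4:ℝ))^(j:ℕ) = (4:ℝ) ^ (j:ℝ) := (Real.rpow_natCast 4 j).symm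
        _ ≤ (4:ℝ) ^ Real.logb 4 (B/ε) := Real.rpow_le_rpow_of_exponent_le (by norm_num) hj'
        _ = B/ε := Real.rpow_logb (by norm_num) (by norm_num) (by positivity)
    have h4pos : (0:ℝ) < 4^j := by positivity
    rw [inv_pow, ← div_eq_mul_inv, le_div_iff₀ h4pos]
    calc ε * 4^j ≤ ε * (B/ε) := by
          exact mul_le_mul_of_nonneg_left h4 hε.le
      _ = B := by field_simp
  
lemma dyadic_M (B ε : ℝ) (hB : 0 < B) (hε : 0 < ε) (hεB : ε ≤ B) :
    ∃ M : ℕ, (M:ℝ) ≤ Real.logb 4 (B/ε) + 1 ∧ B * ((4:ℝ)⁻¹)^M ≤ ε := by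
  have hy0 : 0 ≤ Real.logb 4 (B/ε) :=
    Real.logb_nonneg (by norm_num) ((le_div_iff₀ hε).2 (by linarith))
  refine ⟨⌈Real.logb 4 (B/ε)⌉₊, (Nat.ceil_lt_add_one hy0).le, ?_⟩
  have h4 : B/ε ≤ ((4:ℝ))^(⌈Real.logb 4 (B/ε)⌉₊:ℕ) := by
    calc B/ε = (4:ℝ) ^ Real.logb 4 (B/ε) :=
          (Real.rpow_logb (by norm_num) (by norm_num) (by positivity)).symm
      _ ≤ (4:ℝ) ^ ((⌈Real.logb 4 (B/ε)⌉₊:ℕ):ℝ) :=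
          Real.rpow_le_rpow_of_exponent_le (by norm_num) (Nat.le_ceil _)
      _ = ((4:ℝ))^(⌈Real.logb 4 (B/ε)⌉₊:ℕ) := Real.rpow_natCast 4 _
  have h4pos : (0:ℝ) < 4^(⌈Real.logb 4 (B/ε)⌉₊:ℕ) := by positivity
  rw [inv_pow, ← div_eq_mul_inv, div_le_iff₀ h4pos]
  calc B = (B/ε) * ε := by field_simp
    _ ≤ (4:ℝ)^(⌈Real.logb 4 (B/ε)⌉₊:ℕ) * ε := mul_le_mul_of_nonneg_right h4 hε.le
    _ = ε * 4^(⌈Real.logb 4 (B/ε)⌉₊:ℕ) := by ring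

lemma alg_up (Λ x y z : ℝ) (h1 : 1 ≤ Λ) (hx : 0 ≤ x) (hy : 0 ≤ y) (hz : 0 ≤ z) :
    x*(Λ*y + 4) + z ≤ Λ*(x*(y+4) + z) := by
  nlinarith [mul_nonneg (sub_nonneg.2 h1) hx, mul_nonneg (sub_nonneg.2 h1) hz]

end AUX

set_option maxHeartbeats 1000000 in
/-- If `φ₀` is nondegenerate, there exist `c, C > 0` and `τ₀ ∈ (0,τ*)` with
`c·(log(1/(τ*−τ)))⁻² ≤ α(τ) ≤ C·(log(1/(τ*−τ)))⁻²` for all `τ ∈ (τ₀,τ*)`; in particular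
`α(τ) → 0` as `τ → τ*⁻`. -/
theorem stmt_15
    (L : ℝ) (hL : 0 < L)
    (Q : Set (ℝ × ℝ)) (hQ : Q = Set.Icc (0, 0) (L, L))
    (φ₀ : ℝ × ℝ → ℝ) (hφcont : ContinuousOn φ₀ Q)
    (hmean : ∫ a in Q, φ₀ a = 0)
    (m₀ : ℝ) (hmin : ∀ a ∈ Q, m₀ ≤ φ₀ a) (hatt : ∃ a ∈ Q, φ₀ a = m₀)
    (hm₀ : m₀ < 0)
    (τstar : ℝ) (hτstar : τstar = -1 / m₀)
    (F α : ℝ → ℝ)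
    (hF : ∀ τ ∈ Set.Ico 0 τstar, F τ = (1 / L ^ 2) * ∫ a in Q, 1 / (1 + τ * φ₀ a))
    (hα : ∀ τ ∈ Set.Ico 0 τstar, α τ = ((F τ) ^ 2)⁻¹)
    (hnd : Nondegenerate Q φ₀ m₀) :
    (∃ c > (0 : ℝ), ∃ C > (0 : ℝ), ∃ τ₀ ∈ Set.Ioo 0 τstar,
      ∀ τ ∈ Set.Ioo τ₀ τstar,
        c * ((Real.log (1 / (τstar - τ))) ^ 2)⁻¹ ≤ α τ ∧
        α τ ≤ C * ((Real.log (1 / (τstar - τ))) ^ 2)⁻¹) ∧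
    Filter.Tendsto α (nhdsWithin τstar (Set.Ico 0 τstar)) (nhds 0) := by
  have hm₀' : (0:ℝ) < -m₀ := by linarith
  have hτseq : τstar = (-m₀)⁻¹ := by rw [hτstar]; field_simp [hm₀.ne]
  have hτs : 0 < τstar := by rw [hτseq]; positivity
  have hm₀τ : m₀ * τstar = -1 := by rw [hτstar]; field_simp [hm₀.ne]
  obtain ⟨S, hS, hSint, r, hr, c₁, c₂, hc₁, hc₁₂, hbd⟩ := hnd
  have hc₂ : 0 < c₂ := lt_of_lt_of_le hc₁ hc₁₂
  obtain ⟨a₀, ha₀Q, ha₀⟩ := hatt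
  have ha₀S : a₀ ∈ S := by
    rw [← Finset.mem_coe, hS]; exact ⟨ha₀Q, ha₀⟩
  have ha₀int : a₀ ∈ interior Q := hSint (Finset.mem_coe.2 ha₀S)
  obtain ⟨ρ₀, hρ₀, hballint⟩ := Metric.isOpen_iff.1 isOpen_interior a₀ ha₀int
  set ρ : ℝ := min ρ₀ r with hρdef
  have hρ : 0 < ρ := lt_min hρ₀ hr
  have hρr : ρ ≤ r := min_le_right _ _
  have hballQ : Metric.ball a₀ ρ ⊆ Q :=
    (Metric.ball_subset_ball (min_le_left _ _)).trans (hballint.trans interior_subset)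
  -- Q facts
  have hQc : IsCompact Q := hQ ▸ isCompact_Icc
  have hQm : MeasurableSet Q := hQ ▸ measurableSet_Icc
  have hQvol : volume Q = ENNReal.ofReal (L^2) := by
    rw [hQ, Set.Icc_prod_eq, MeasureTheory.Measure.volume_eq_prod, Measure.prod_prod]
    simp only [Real.volume_Icc]
    rw [← ENNReal.ofReal_mul (by simp; linarith)]
    norm_num; ring_nf
  have hQnorm : ∀ a ∈ Q, ∀ b ∈ Q, ‖a - b‖ ≤ L := by
    intro a ha b hb
    rw [hQ, Set.mem_Icc] at ha hb
    have ha1 := ha.1.1; have ha2 := ha.1.2; have ha3 := ha.2.1; have ha4 := ha.2.2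
    have hb1 := hb.1.1; have hb2 := hb.1.2; have hb3 := hb.2.1; have hb4 := hb.2.2
    simp only at ha1 ha2 ha3 ha4 hb1 hb2 hb3 hb4
    rw [Prod.norm_def]
    apply max_le <;>
      simp only [Prod.fst_sub, Prod.snd_sub, Real.norm_eq_abs, abs_le] <;>
      constructor <;> linarith
  -- δ construction
  have hδex : ∃ δ : ℝ, 0 < δ ∧
      ∀ a ∈ Q, (∀ i ∈ S, a ∉ Metric.ball i r) → δ ≤ φ₀ a - m₀ := by
    set U : Set (ℝ×ℝ) := ⋃ i ∈ S, Metric.ball i r with hUdef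
    have hUopen : IsOpen U := isOpen_biUnion (fun i _ => Metric.isOpen_ball)
    set T : Set (ℝ×ℝ) := Q \ U with hTdef
    have hTc : IsCompact T := hQc.diff hUopen
    rcases T.eq_empty_or_nonempty with hTe | hTne
    · refine ⟨1, one_pos, fun a ha hnb => ?_⟩
      exfalso
      have : a ∈ T := ⟨ha, by
        rw [hUdef]
        simp only [Set.mem_iUnion, not_exists]
        intro i hi
        exact fun h => hnb i hi h⟩
      rw [hTe] at this
      exact this
    · obtain ⟨z, hzT, hzmin⟩ := hTc.exists_isMinOn hTne (hφcont.mono (Set.diff_subset))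
      refine ⟨φ₀ z - m₀, ?_, fun a ha hnb => ?_⟩
      · rcases lt_or_eq_of_le (hmin z hzT.1) with h | h
        · linarith
        · exfalso
          have hzS : z ∈ S := by
            rw [← Finset.mem_coe, hS]; exact ⟨hzT.1, h.symm⟩
          have : z ∈ U := by
            rw [hUdef]
            exact Set.mem_biUnion hzS (Metric.mem_ball_self hr)
          exact hzT.2 this
      · have haT : a ∈ T := ⟨ha, by
          rw [hUdef]
          simp only [Set.mem_iUnion, not_exists]
          intro i hi
          exact fun h => hnb i hi h⟩
        have := hzmin haT
        simp only [Set.mem_setOf_eq] at this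
        linarith
  obtain ⟨δ, hδpos, hδ⟩ := hδex
  -- constants
  set K₂ : ℝ := τstar * c₂ with hK₂def
  have hK₂ : 0 < K₂ := by positivity
  set K₁ : ℝ := (τstar/2) * c₁ with hK₁def
  have hK₁ : 0 < K₁ := by positivity
  set B₂ : ℝ := K₂ * ρ^2 with hB₂def
  have hB₂ : 0 < B₂ := by positivity
  set Dδ : ℝ := 1/((τstar/2)*δ) with hDδdef
  have hDδ : 0 < Dδ := by positivity
  set cardS : ℝ := (S.card : ℝ) with hcarddef
  have hcard : 1 ≤ cardS := by
    rw [hcarddef]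
    exact_mod_cast Nat.one_le_iff_ne_zero.2 (Finset.card_ne_zero_of_mem ha₀S)
  have hlog4 : (0:ℝ) < Real.log 4 := Real.log_pos (by norm_num)
  set Λ₀ : ℝ := 1 + Real.log 4 + 2*(|Real.log B₂| + |Real.log (-m₀)|)
      + |Real.log ((2*L)^2)| + |Real.log (-m₀)| with hΛ₀def
  have hΛ₀1 : 1 ≤ Λ₀ := by
    rw [hΛ₀def]
    have := abs_nonneg (Real.log B₂); have := abs_nonneg (Real.log (-m₀))
    have := abs_nonneg (Real.log ((2*L)^2)); linarith
  set η : ℝ := min (τstar/2) (min (B₂*τstar) (min ((2*L)^2*τstar) (Real.exp (-Λ₀)))) with hηdef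
  have hη : 0 < η := by
    rw [hηdef]
    refine lt_min (by positivity) (lt_min (by positivity) (lt_min (by positivity) (by positivity)))
  have hη1 : η ≤ τstar/2 := min_le_left _ _
  have hη2 : η ≤ B₂*τstar := le_trans (min_le_right _ _) (min_le_left _ _)
  have hη3 : η ≤ (2*L)^2*τstar :=
    le_trans (min_le_right _ _) (le_trans (min_le_right _ _) (min_le_left _ _))
  have hη4 : η ≤ Real.exp (-Λ₀) :=
    le_trans (min_le_right _ _) (le_trans (min_le_right _ _) (min_le_right _ _))
  set τ₀ : ℝ := τstar - η with hτ₀def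
  have hτ₀Ioo : τ₀ ∈ Set.Ioo 0 τstar := by
    constructor
    · rw [hτ₀def]; linarith
    · rw [hτ₀def]; linarith
  set cA : ℝ := (3/(4*K₂*Real.log 4)) / L^2 with hcAdef
  have hcA : 0 < cA := by positivity
  set cB : ℝ := (cardS*(36/(K₁*Real.log 4) + 4) + Dδ*L^2) / L^2 with hcBdef
  have hcB : 0 < cB := by
    have h1 : 0 < 36/(K₁*Real.log 4) := by positivity
    have h2 : 0 < Dδ*L^2 := by positivity
    have : 0 < cardS*(36/(K₁*Real.log 4) + 4) := by nlinarith
    rw [hcBdef]; positivity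
  -- main F bounds
  have hFbounds : ∀ τ ∈ Set.Ioo τ₀ τstar,
      0 < Real.log (1/(τstar - τ)) ∧
      cA * Real.log (1/(τstar - τ)) ≤ F τ ∧
      F τ ≤ cB * Real.log (1/(τstar - τ)) := by
    intro τ hτ'
    obtain ⟨hττ₀, hττs⟩ := hτ'
    set s : ℝ := τstar - τ with hsdef
    set ε : ℝ := 1 + τ*m₀ with hεdef
    set Λ : ℝ := Real.log (1/s) with hΛdef
    have hsτ : 0 < s := by rw [hsdef]; linarith
    have hsη : s < η := by
      rw [hτ₀def] at hττ₀
      rw [hsdef]; linarith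
    have hτhalf : τstar/2 ≤ τ := by linarith [hη1]
    have hτpos : 0 < τ := by linarith
    have hτIco : τ ∈ Set.Ico 0 τstar := ⟨hτpos.le, hττs⟩
    have hεs : ε = s*(-m₀) := by rw [hεdef, hsdef]; linear_combination hm₀τ
    have hε : 0 < ε := by rw [hεs]; positivity
    have hτm : τstar * (-m₀) = 1 := by linear_combination -hm₀τ
    have hεB₂ : ε ≤ B₂ := by
      rw [hεs]
      calc s*(-m₀) ≤ η*(-m₀) := mul_le_mul_of_nonneg_right hsη.le hm₀'.le
        _ ≤ (B₂*τstar)*(-m₀) := mul_le_mul_of_nonneg_right hη2 hm₀'.le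
        _ = B₂ := by rw [mul_assoc, hτm, mul_one]
    have hεBL : ε ≤ (2*L)^2 := by
      rw [hεs]
      calc s*(-m₀) ≤ η*(-m₀) := mul_le_mul_of_nonneg_right hsη.le hm₀'.le
        _ ≤ ((2*L)^2*τstar)*(-m₀) := mul_le_mul_of_nonneg_right hη3 hm₀'.le
        _ = (2*L)^2 := by rw [mul_assoc, hτm, mul_one]
    have hΛeq : Λ = -Real.log s := by rw [hΛdef, one_div, Real.log_inv]
    have hΛbig : Λ₀ < Λ := by
      have h1 : Real.log s < Real.log (Real.exp (-Λ₀)) :=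
        Real.log_lt_log hsτ (lt_of_lt_of_le hsη hη4)
      rw [Real.log_exp] at h1
      rw [hΛeq]; linarith
    have hΛpos : 0 < Λ := by linarith
    have hlogε : Real.log ε = -Λ + Real.log (-m₀) := by
      rw [hεs, Real.log_mul (ne_of_gt hsτ) (ne_of_gt hm₀'), hΛeq]; ring
    have hΛ₀p : Real.log 4 ≤ Λ₀ ∧ 2*(|Real.log B₂| + |Real.log (-m₀)|) ≤ Λ₀ ∧
        |Real.log ((2*L)^2)| + |Real.log (-m₀)| ≤ Λ₀ := by
      rw [hΛ₀def]
      have h1 := abs_nonneg (Real.log B₂); have h2 := abs_nonneg (Real.log (-m₀))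
      have h3 := abs_nonneg (Real.log ((2*L)^2))
      exact ⟨by linarith, by linarith, by linarith⟩
    have hε' : 0 < 1 + τ*m₀ := hεdef ▸ hε
    have hden : ∀ a ∈ Q, 0 < 1 + τ*φ₀ a := by
      intro a ha
      have h := mul_le_mul_of_nonneg_left (hmin a ha) hτpos.le
      linarith
    have hgc : ContinuousOn (fun a => 1/(1+τ*φ₀ a)) Q := by
      apply ContinuousOn.div continuousOn_const
        (continuousOn_const.add (continuousOn_const.mul hφcont))
      exact fun a ha => ne_of_gt (hden a ha)
    have hgint : IntegrableOn (fun a => 1/(1+τ*φ₀ a)) Q := hgc.integrableOn_compact hQc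
    have hgnn : ∀ a ∈ Q, 0 ≤ 1/(1+τ*φ₀ a) :=
      fun a ha => le_of_lt (by exact one_div_pos.2 (hden a ha))
    -- LOWER BOUND
    obtain ⟨N, hNge, hNprop⟩ := dyadic_N B₂ ε hB₂ hε hεB₂
    have hNprop' : ∀ j < N, ε ≤ K₂ * ρ^2 * ((4:ℝ)⁻¹)^j :=
      fun j hj => hB₂def ▸ hNprop j hj
    have hlow1 := ball_int_lower ε K₂ ρ a₀ hε hK₂ hρ N hNprop'
    have hlow2 : (∫ x in Metric.ball a₀ ρ, 1/(ε + K₂*‖x-a₀‖^2))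
        ≤ ∫ x in Metric.ball a₀ ρ, 1/(1+τ*φ₀ x) := by
      apply setIntegral_mono_on (intble_aux ε K₂ ρ a₀ a₀ hε hK₂.le)
        (hgint.mono_set hballQ) measurableSet_ball
      intro x hx
      have hxQ : x ∈ Q := hballQ hx
      have hxr : ‖x - a₀‖ ≤ r := by
        have h := Metric.mem_ball.1 hx; rw [dist_eq_norm] at h; linarith [hρr]
      have hub := (hbd a₀ ha₀S x hxQ hxr).2
      have hden2 : 1 + τ*φ₀ x ≤ ε + K₂*‖x-a₀‖^2 := by
        have h1 : 1 + τ*φ₀ x = ε + τ*(φ₀ x - m₀) := by rw [hεdef]; ring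
        have h2 : τ*(φ₀ x - m₀) ≤ τ*(c₂*‖x-a₀‖^2) := mul_le_mul_of_nonneg_left hub hτpos.le
        have h3 : τ*(c₂*‖x-a₀‖^2) ≤ τstar*(c₂*‖x-a₀‖^2) :=
          mul_le_mul_of_nonneg_right hττs.le (by positivity)
        have h4 : K₂*‖x-a₀‖^2 = τstar*(c₂*‖x-a₀‖^2) := by rw [hK₂def]; ring
        linarith
      exact one_div_le_one_div_of_le (hden x hxQ) hden2
    have hlow3 : (∫ x in Metric.ball a₀ ρ, 1/(1+τ*φ₀ x)) ≤ ∫ a in Q, 1/(1+τ*φ₀ a) := by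
      apply setIntegral_mono_set hgint
      · exact (ae_restrict_iff' hQm).2 (Filter.Eventually.of_forall hgnn)
      · exact HasSubset.Subset.eventuallyLE hballQ
    have hlogb : Λ/(2*Real.log 4) ≤ Real.logb 4 (B₂/ε) := by
      rw [Real.logb, Real.log_div (ne_of_gt hB₂) (ne_of_gt hε), hlogε]
      have e1 : Λ/(2*Real.log 4) = (Λ/2)/Real.log 4 := by ring
      rw [e1, div_le_div_iff_of_pos_right hlog4]
      have k1 : -|Real.log B₂| ≤ Real.log B₂ := neg_abs_le _
      have k2 : Real.log (-m₀) ≤ |Real.log (-m₀)| := le_abs_self _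
      linarith [hΛ₀p.2.1, hΛbig]
    have hNΛ : Λ/(2*Real.log 4) ≤ (N:ℝ) := le_trans hlogb hNge
    have hintlow : Λ * (3/(4*K₂*Real.log 4)) ≤ ∫ a in Q, 1/(1+τ*φ₀ a) := by
      have h0 : Λ * (3/(4*K₂*Real.log 4)) = (Λ/(2*Real.log 4)) * (3/(2*K₂)) := by
        field_simp
        ring
      rw [h0]
      calc (Λ/(2*Real.log 4)) * (3/(2*K₂)) ≤ (N:ℝ)*(3/(2*K₂)) :=
            mul_le_mul_of_nonneg_right hNΛ (by positivity)
        _ ≤ _ := le_trans hlow1 (le_trans hlow2 hlow3)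
    have hFlow : cA * Λ ≤ F τ := by
      rw [hF τ hτIco, hcAdef]
      calc (3/(4*K₂*Real.log 4))/L^2 * Λ = (1/L^2) * (Λ * (3/(4*K₂*Real.log 4))) := by ring
        _ ≤ (1/L^2) * ∫ a in Q, 1/(1+τ*φ₀ a) :=
            mul_le_mul_of_nonneg_left hintlow (by positivity)
    -- UPPER BOUND
    obtain ⟨M, hMle, hMprop⟩ := dyadic_M ((2*L)^2) ε (by positivity) hε hεBL
    have hQsub : ∀ i ∈ S, Q ⊆ Metric.ball i (2*L) := by
      intro i hiS a ha
      have hiQ : i ∈ Q := by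
        have h : (i:ℝ×ℝ) ∈ (↑S : Set (ℝ×ℝ)) := Finset.mem_coe.2 hiS
        rw [hS] at h; exact h.1
      rw [Metric.mem_ball, dist_eq_norm]
      have h := hQnorm a ha i hiQ
      linarith
    have hup_i : ∀ i ∈ S, (∫ a in Q, 1/(ε + K₁*‖a-i‖^2)) ≤ (M:ℝ)*(12/K₁) + 4 := by
      intro i hiS
      have h1 : (∫ a in Q, 1/(ε + K₁*‖a-i‖^2))
          ≤ ∫ x in Metric.ball i (2*L), 1/(ε + K₁*‖x-i‖^2) := by
        apply setIntegral_mono_set (intble_aux ε K₁ (2*L) i i hε hK₁.le)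
        · exact Filter.Eventually.of_forall (fun x => by positivity)
        · exact HasSubset.Subset.eventuallyLE (hQsub i hiS)
      exact le_trans h1 (ball_int_upper ε K₁ (2*L) i hε hK₁ (by positivity) M hMprop)
    have hpt : ∀ a ∈ Q, 1/(1+τ*φ₀ a) ≤ (∑ i ∈ S, 1/(ε + K₁*‖a-i‖^2)) + Dδ := by
      intro a ha
      have hsum_nn : 0 ≤ ∑ i ∈ S, 1/(ε + K₁*‖a-i‖^2) :=
        Finset.sum_nonneg (fun i _ => by positivity)
      by_cases hcase : ∃ i ∈ S, a ∈ Metric.ball i r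
      · obtain ⟨i, hiS, hai⟩ := hcase
        have hair : ‖a - i‖ ≤ r := by
          have h := Metric.mem_ball.1 hai; rw [dist_eq_norm] at h; linarith
        have hlb := (hbd i hiS a ha hair).1
        have hden2 : ε + K₁*‖a-i‖^2 ≤ 1 + τ*φ₀ a := by
          have h1 : 1 + τ*φ₀ a = ε + τ*(φ₀ a - m₀) := by rw [hεdef]; ring
          have h2 : τ*(c₁*‖a-i‖^2) ≤ τ*(φ₀ a - m₀) := mul_le_mul_of_nonneg_left hlb hτpos.le
          have h3 : (τstar/2)*(c₁*‖a-i‖^2) ≤ τ*(c₁*‖a-i‖^2) :=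
            mul_le_mul_of_nonneg_right hτhalf (by positivity)
          have h4 : K₁*‖a-i‖^2 = (τstar/2)*(c₁*‖a-i‖^2) := by rw [hK₁def]; ring
          linarith
        have h5 : 1/(1+τ*φ₀ a) ≤ 1/(ε + K₁*‖a-i‖^2) :=
          one_div_le_one_div_of_le (by positivity) hden2
        have h6 : 1/(ε + K₁*‖a-i‖^2) ≤ ∑ i ∈ S, 1/(ε + K₁*‖a-i‖^2) :=
          Finset.single_le_sum (f := fun i => 1/(ε + K₁*‖a-i‖^2))
            (fun j _ => by positivity) hiS
        linarith [hDδ]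
      · push_neg at hcase
        have hδa := hδ a ha hcase
        have hden2 : (τstar/2)*δ ≤ 1 + τ*φ₀ a := by
          have h1 : 1 + τ*φ₀ a = ε + τ*(φ₀ a - m₀) := by rw [hεdef]; ring
          have h2 : τ*δ ≤ τ*(φ₀ a - m₀) := mul_le_mul_of_nonneg_left hδa hτpos.le
          have h3 : (τstar/2)*δ ≤ τ*δ := mul_le_mul_of_nonneg_right hτhalf hδpos.le
          linarith
        have h5 : 1/(1+τ*φ₀ a) ≤ Dδ := by
          rw [hDδdef]
          exact one_div_le_one_div_of_le (by positivity) hden2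
        linarith
    have hGint : IntegrableOn (fun a => (∑ i ∈ S, 1/(ε + K₁*‖a-i‖^2)) + Dδ) Q :=
      ((continuous_finset_sum S (fun i _ => cont_aux ε K₁ i hε hK₁.le)).add
        continuous_const).locallyIntegrable.integrableOn_isCompact hQc
    have hup1 : (∫ a in Q, 1/(1+τ*φ₀ a))
        ≤ ∫ a in Q, ((∑ i ∈ S, 1/(ε + K₁*‖a-i‖^2)) + Dδ) :=
      setIntegral_mono_on hgint hGint hQm hpt
    have hsumint : IntegrableOn (fun a => ∑ i ∈ S, 1/(ε + K₁*‖a-i‖^2)) Q :=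
      (continuous_finset_sum S
        (fun i _ => cont_aux ε K₁ i hε hK₁.le)).locallyIntegrable.integrableOn_isCompact hQc
    have hup2 : (∫ a in Q, ((∑ i ∈ S, 1/(ε + K₁*‖a-i‖^2)) + Dδ))
        = (∑ i ∈ S, ∫ a in Q, 1/(ε + K₁*‖a-i‖^2)) + Dδ*L^2 := by
      rw [integral_add hsumint
        (integrableOn_const (by rw [hQvol]; exact ENNReal.ofReal_ne_top))]
      rw [integral_finset_sum S (fun i _ =>
        (cont_aux ε K₁ i hε hK₁.le).locallyIntegrable.integrableOn_isCompact hQc)]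
      rw [setIntegral_const, measureReal_def, hQvol, ENNReal.toReal_ofReal (by positivity), smul_eq_mul]
      ring
    have hup3 : (∑ i ∈ S, ∫ a in Q, 1/(ε + K₁*‖a-i‖^2)) ≤ cardS * ((M:ℝ)*(12/K₁) + 4) := by
      have h := Finset.sum_le_card_nsmul S _ _ (fun i hi => hup_i i hi)
      rwa [nsmul_eq_mul] at h
    have hMΛ : (M:ℝ) ≤ 3*Λ/Real.log 4 := by
      have hlogb2 : Real.logb 4 ((2*L)^2/ε) ≤ 2*Λ/Real.log 4 := by
        rw [Real.logb, Real.log_div (by positivity) (ne_of_gt hε), hlogε]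
        have e1 : 2*Λ/Real.log 4 = (2*Λ)/Real.log 4 := by ring
        rw [e1, div_le_div_iff_of_pos_right hlog4]
        have k1 : Real.log ((2*L)^2) ≤ |Real.log ((2*L)^2)| := le_abs_self _
        have k2 : -|Real.log (-m₀)| ≤ Real.log (-m₀) := neg_abs_le _
        linarith [hΛ₀p.2.2, hΛbig]
      have h1 : (1:ℝ) ≤ Λ/Real.log 4 := by
        rw [le_div_iff₀ hlog4]
        linarith [hΛ₀p.1, hΛbig]
      calc (M:ℝ) ≤ Real.logb 4 ((2*L)^2/ε) + 1 := hMle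
        _ ≤ 2*Λ/Real.log 4 + Λ/Real.log 4 := by linarith
        _ = 3*Λ/Real.log 4 := by ring
    have hintup : (∫ a in Q, 1/(1+τ*φ₀ a))
        ≤ Λ * (cardS*(36/(K₁*Real.log 4) + 4) + Dδ*L^2) := by
      have hcnn : (0:ℝ) ≤ cardS := by linarith
      have h1 : (∫ a in Q, 1/(1+τ*φ₀ a)) ≤ cardS * ((M:ℝ)*(12/K₁) + 4) + Dδ*L^2 := by
        rw [hup2] at hup1; linarith [hup3]
      have h2a : (M:ℝ)*(12/K₁) ≤ (3*Λ/Real.log 4)*(12/K₁) :=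
        mul_le_mul_of_nonneg_right hMΛ (by positivity)
      have h2 : cardS * ((M:ℝ)*(12/K₁) + 4) ≤ cardS * ((3*Λ/Real.log 4)*(12/K₁) + 4) :=
        mul_le_mul_of_nonneg_left (by linarith) hcnn
      have e1 : (3*Λ/Real.log 4)*(12/K₁) = Λ*(36/(K₁*Real.log 4)) := by
        field_simp
        ring
      have hΛ1 : 1 ≤ Λ := by linarith [hΛ₀1, hΛbig]
      have h3 : cardS * ((3*Λ/Real.log 4)*(12/K₁) + 4) + Dδ*L^2
          ≤ Λ * (cardS*(36/(K₁*Real.log 4) + 4) + Dδ*L^2) := by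
        rw [e1]
        exact alg_up Λ cardS (36/(K₁*Real.log 4)) (Dδ*L^2) hΛ1 hcnn
          (by positivity) (by positivity)
      linarith
    have hFup : F τ ≤ cB * Λ := by
      rw [hF τ hτIco, hcBdef]
      calc (1/L^2) * ∫ a in Q, 1/(1+τ*φ₀ a)
          ≤ (1/L^2) * (Λ * (cardS*(36/(K₁*Real.log 4) + 4) + Dδ*L^2)) :=
            mul_le_mul_of_nonneg_left hintup (by positivity)
        _ = (cardS*(36/(K₁*Real.log 4) + 4) + Dδ*L^2)/L^2 * Λ := by ring
    exact ⟨hΛpos, hFlow, hFup⟩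
  have hαb : ∀ τ ∈ Set.Ioo τ₀ τstar,
      (cB^2)⁻¹ * ((Real.log (1/(τstar - τ)))^2)⁻¹ ≤ α τ ∧
      α τ ≤ (cA^2)⁻¹ * ((Real.log (1/(τstar - τ)))^2)⁻¹ := by
    intro τ hτ
    obtain ⟨hΛpos, hFlow, hFup⟩ := hFbounds τ hτ
    have hτIco : τ ∈ Set.Ico 0 τstar := ⟨by linarith [hτ.1, hτ₀Ioo.1], hτ.2⟩
    rw [hα τ hτIco]
    set Λ := Real.log (1/(τstar - τ))
    have hFpos : 0 < F τ := lt_of_lt_of_le (by positivity) hFlow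
    constructor
    · have h1 : (F τ)^2 ≤ (cB*Λ)^2 := pow_le_pow_left₀ hFpos.le hFup 2
      calc (cB^2)⁻¹ * (Λ^2)⁻¹ = ((cB*Λ)^2)⁻¹ := by rw [mul_pow, mul_inv]
        _ ≤ ((F τ)^2)⁻¹ := by
            apply inv_anti₀ (by positivity) h1
    · have h1 : (cA*Λ)^2 ≤ (F τ)^2 := pow_le_pow_left₀ (by positivity) hFlow 2
      calc ((F τ)^2)⁻¹ ≤ ((cA*Λ)^2)⁻¹ := by
            apply inv_anti₀ (by positivity) h1
        _ = (cA^2)⁻¹ * (Λ^2)⁻¹ := by rw [mul_pow, mul_inv]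
  constructor
  · exact ⟨(cB^2)⁻¹, by positivity, (cA^2)⁻¹, by positivity, τ₀, hτ₀Ioo, hαb⟩
  · have hev : ∀ᶠ τ in nhdsWithin τstar (Set.Ico 0 τstar), τ ∈ Set.Ioo τ₀ τstar := by
      have h1 : Set.Ioo τ₀ (τstar+1) ∈ nhds τstar :=
        Ioo_mem_nhds (by linarith [hτ₀Ioo.2]) (by linarith)
      have h2 : ∀ᶠ τ in nhdsWithin τstar (Set.Ico 0 τstar), τ ∈ Set.Ioo τ₀ (τstar+1) :=
        Filter.Eventually.filter_mono nhdsWithin_le_nhds h1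
      have h3 : ∀ᶠ τ in nhdsWithin τstar (Set.Ico 0 τstar), τ ∈ Set.Ico 0 τstar :=
        eventually_mem_nhdsWithin
      filter_upwards [h2, h3] with τ hτ1 hτ2
      exact ⟨hτ1.1, hτ2.2⟩
    have hg0 : Tendsto (fun τ => (cA^2)⁻¹ * ((Real.log (1/(τstar - τ)))^2)⁻¹)
        (nhdsWithin τstar (Set.Ico 0 τstar)) (nhds 0) := by
      have hA : Tendsto (fun τ => τstar - τ) (nhdsWithin τstar (Set.Ico 0 τstar))
          (nhdsWithin 0 (Set.Ioi 0)) := by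
        rw [tendsto_nhdsWithin_iff]
        constructor
        · have h : Tendsto (fun τ : ℝ => τstar - τ) (nhds τstar) (nhds (τstar - τstar)) :=
            tendsto_const_nhds.sub tendsto_id
          rw [sub_self] at h
          exact h.mono_left nhdsWithin_le_nhds
        · filter_upwards [eventually_mem_nhdsWithin] with τ hτ
          exact sub_pos.2 hτ.2
      have hB : Tendsto (fun s : ℝ => 1/s) (nhdsWithin 0 (Set.Ioi 0)) atTop := by
        simpa [one_div] using tendsto_inv_nhdsGT_zero
      have hC : Tendsto (fun τ => Real.log (1/(τstar - τ)))
          (nhdsWithin τstar (Set.Ico 0 τstar)) atTop :=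
        Real.tendsto_log_atTop.comp (hB.comp hA)
      have hD : Tendsto (fun τ => ((Real.log (1/(τstar - τ)))^2)⁻¹)
          (nhdsWithin τstar (Set.Ico 0 τstar)) (nhds 0) :=
        tendsto_inv_atTop_zero.comp ((tendsto_pow_atTop (by norm_num)).comp hC)
      have h := hD.const_mul ((cA^2)⁻¹)
      simpa using h
    apply squeeze_zero'
    · filter_upwards [hev] with τ hτ
      have hτIco : τ ∈ Set.Ico 0 τstar := ⟨by linarith [hτ.1, hτ₀Ioo.1], hτ.2⟩
      rw [hα τ hτIco]; positivity
    · filter_upwards [hev] with τ hτ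
      exact (hαb τ hτ).2
    · exact hg0
end
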